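/- arXiv:1401.8031 — 5 statements merged into one kernel-verified Lean document; each statement's English description precedes it below -/
import Mathlib

section
/- Mason–Stothers theorem: if a, b, c are coprime polynomials over ℂ, not all constant, with a + b = c, then max(deg a, deg b, deg c) ≤ N₀(abc) − 1, where N₀(f) denotes the number of distinct roots of f. -/
open Polynomial UniqueFactorizationMonoid UniqueFactorizationDomain

lemma radical_squarefree {f : Polynomial ℂ} (hf : f ≠ 0) : Squarefree (radical f) := by
  rw [UniqueFactorizationMonoid.squarefree_iff_nodup_normalizedFactors radical_ne_zero]
  unfold UniqueFactorizationMonoid.radical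
  rw [Finset.prod_eq_multiset_prod, Multiset.map_id]
  rw [UniqueFactorizationMonoid.normalizedFactors_prod_eq
    ((UniqueFactorizationMonoid.primeFactors f).val)
    (fun p hp => (prime_of_normalized_factor p
      (UniqueFactorizationMonoid.mem_primeFactors.mp hp)).irreducible)]
  have : Multiset.map normalize (UniqueFactorizationMonoid.primeFactors f).val
      = (UniqueFactorizationMonoid.primeFactors f).val := by
    rw [Multiset.map_congr rfl (fun p hp => normalize_normalized_factor p
      (UniqueFactorizationMonoid.mem_primeFactors.mp hp))]
    exact Multiset.map_id _
  rw [this]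
  exact (UniqueFactorizationMonoid.primeFactors f).nodup

lemma radical_natDegree_le {f : Polynomial ℂ} (hf : f ≠ 0) :
    (radical f).natDegree ≤ f.roots.toFinset.card := by
  set g := radical f with hg
  have hg0 : g ≠ 0 := radical_ne_zero
  have hsq : Squarefree g := radical_squarefree hf
  have hsep : g.Separable := (PerfectField.separable_iff_squarefree).mpr hsq
  have hnd : g.roots.Nodup := Polynomial.nodup_roots hsep
  have hcard : g.roots.card = g.natDegree :=
    Polynomial.splits_iff_card_roots.mp (IsAlgClosed.splits g)
  have hsub : g.roots.toFinset ⊆ f.roots.toFinset := by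
    intro x hx
    rw [Multiset.mem_toFinset] at hx ⊢
    exact Multiset.mem_of_le (Polynomial.roots.le_of_dvd hf (radical_dvd_self (a := f))) hx
  calc g.natDegree = g.roots.card := hcard.symm
    _ = g.roots.toFinset.card := (Multiset.toFinset_card_of_nodup hnd).symm
    _ ≤ f.roots.toFinset.card := Finset.card_le_card hsub

/-- Mason–Stothers theorem over `ℂ`: if `a, b, c` are pairwise coprime
polynomials, not all constant, with `a + b = c`, then
`max (deg a) (deg b) (deg c) ≤ N₀(abc) − 1`, where `N₀(f)` is the number of
distinct roots of `f`. -/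
theorem mason_stothers (a b c : Polynomial ℂ)
    (hab : IsCoprime a b) (hbc : IsCoprime b c) (hac : IsCoprime a c)
    (hsum : a + b = c)
    (hconst : ¬ (a.natDegree = 0 ∧ b.natDegree = 0 ∧ c.natDegree = 0)) :
    (max (max a.natDegree b.natDegree) c.natDegree : ℤ) ≤
      ((a * b * c).roots.toFinset.card : ℤ) - 1 := by
  -- nonzeroness
  have ha : a ≠ 0 := by
    rintro rfl
    simp only [zero_add] at hsum
    subst hsum
    exact hconst ⟨natDegree_zero, natDegree_eq_zero_of_isUnit (isCoprime_zero_left.mp hab),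
      natDegree_eq_zero_of_isUnit (isCoprime_zero_left.mp hab)⟩
  have hb : b ≠ 0 := by
    rintro rfl
    rw [add_zero] at hsum
    subst hsum
    exact hconst ⟨natDegree_eq_zero_of_isUnit (isCoprime_zero_right.mp hab), natDegree_zero,
      natDegree_eq_zero_of_isUnit (isCoprime_zero_right.mp hab)⟩
  have hc : c ≠ 0 := by
    rintro rfl
    have hau : IsUnit a := isCoprime_zero_right.mp hac
    have hbu : IsUnit b := isCoprime_zero_right.mp hbc
    exact hconst ⟨natDegree_eq_zero_of_isUnit hau, natDegree_eq_zero_of_isUnit hbu, natDegree_zero⟩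
  have hc' : (-c : Polynomial ℂ) ≠ 0 := neg_ne_zero.mpr hc
  have habc : a * b * c ≠ 0 := mul_ne_zero (mul_ne_zero ha hb) hc
  have habc' : a + b + (-c) = 0 := by rw [hsum]; ring
  have h := Polynomial.abc ha hb hc' hab habc'
  rcases h with ⟨h1, h2, h3⟩ | ⟨d1, d2, d3⟩
  · have hrad : radical (a * b * (-c)) = radical (a * b * c) := by
      rw [mul_neg, radical_neg]
    rw [hrad] at h1 h2 h3
    rw [natDegree_neg] at h3
    have hle := radical_natDegree_le habc
    have h1' := le_trans h1 hle
    have h2' := le_trans h2 hle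
    have h3' := le_trans h3 hle
    have hmax : max (max a.natDegree b.natDegree) c.natDegree + 1 ≤
        (a * b * c).roots.toFinset.card := by omega
    have hmax' : (max (max a.natDegree b.natDegree) c.natDegree : ℤ) + 1 ≤
        ((a * b * c).roots.toFinset.card : ℤ) := by exact_mod_cast hmax
    linarith
  · have hd3 : derivative c = 0 := by
      rwa [derivative_neg, neg_eq_zero] at d3
    exact absurd ⟨natDegree_eq_zero_of_derivative_eq_zero d1,
      natDegree_eq_zero_of_derivative_eq_zero d2,
      natDegree_eq_zero_of_derivative_eq_zero hd3⟩ hconst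
end

section
/- If rational functions f, g, h over ℂ satisfy f^n + g^n = h^n with n ≥ 3, then f, g, h all lie in a one-dimensional ℂ-subspace of the field of rational functions (i.e., the triple is trivial). -/
open Polynomial UniqueFactorizationMonoid

-- coprime polynomial FLT
lemma flt_coprime (n : ℕ) (hn : 3 ≤ n) (p q r : Polynomial ℂ)
    (hp : p ≠ 0) (hq : q ≠ 0) (hr : r ≠ 0) (hpq : IsCoprime p q)
    (heq : p ^ n + q ^ n = r ^ n) :
    p.natDegree = 0 ∧ q.natDegree = 0 ∧ r.natDegree = 0 := by
  have hn0 : 0 < n := by omega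
  have hpr : IsCoprime p r := by
    rw [← IsCoprime.pow_iff hn0 hn0]
    rw [← heq]
    simpa [add_comm] using (hpq.pow (m := n) (n := n)).add_mul_left_right 1
  have hqr : IsCoprime q r := by
    rw [← IsCoprime.pow_iff hn0 hn0]
    rw [← heq]
    simpa [add_comm] using (hpq.pow (m := n) (n := n)).symm.add_mul_left_right 1
  have hsum : p ^ n + q ^ n + -(r ^ n) = 0 := by rw [heq]; ring
  have habc := Polynomial.abc (pow_ne_zero n hp) (pow_ne_zero n hq)
    (neg_ne_zero.mpr (pow_ne_zero n hr)) (hpq.pow) hsum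
  rcases habc with ⟨h1, h2, h3⟩ | ⟨d1, d2, d3⟩
  · exfalso
    have hrad : radical (p ^ n * q ^ n * -(r ^ n)) = radical (p * q * r) := by
      rw [show p ^ n * q ^ n * -(r ^ n) = -((p * q * r) ^ n) by ring, UniqueFactorizationDomain.radical_neg,
        radical_pow _ hn0.ne']
    rw [hrad, natDegree_pow] at h1 h2
    rw [hrad, natDegree_neg, natDegree_pow] at h3
    have hpqr : p * q * r ≠ 0 := mul_ne_zero (mul_ne_zero hp hq) hr
    have hle : (radical (p * q * r)).natDegree ≤ p.natDegree + q.natDegree + r.natDegree := by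
      have := Polynomial.natDegree_le_of_dvd (radical_dvd_self (a := p * q * r)) hpqr
      rwa [natDegree_mul (mul_ne_zero hp hq) hr, natDegree_mul hp hq] at this
    have hS : n * p.natDegree + n * q.natDegree + n * r.natDegree
        = n * (p.natDegree + q.natDegree + r.natDegree) := by ring
    have h3S : 3 * (p.natDegree + q.natDegree + r.natDegree)
        ≤ n * (p.natDegree + q.natDegree + r.natDegree) :=
      Nat.mul_le_mul_right _ hn
    omega
    -- combine: n*(dp+dq+dr)+3 ≤ 3*rad ≤ 3*(dp+dq+dr), n ≥ 3 contradiction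
  · have key : ∀ s : Polynomial ℂ, s ≠ 0 → derivative (s ^ n) = 0 → s.natDegree = 0 := by
      intro s hs hds
      apply natDegree_eq_zero_of_derivative_eq_zero
      rw [derivative_pow] at hds
      have : (C (n : ℂ)) ≠ 0 := by
        simp only [ne_eq, C_eq_zero, Nat.cast_eq_zero]; omega
      have h2 := mul_eq_zero.mp hds
      rcases h2 with h2 | h2
      · rcases mul_eq_zero.mp h2 with h3 | h3
        · exact absurd h3 this
        · exact absurd h3 (pow_ne_zero _ hs)
      · exact h2
    rw [derivative_neg, neg_eq_zero] at d3
    exact ⟨key p hp d1, key q hq d2, key r hr d3⟩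


lemma flt_poly (n : ℕ) (hn : 3 ≤ n) (A B E : Polynomial ℂ)
    (hA : A ≠ 0) (hB : B ≠ 0) (hE : E ≠ 0) (heq : A ^ n + B ^ n = E ^ n) :
    ∃ (d : Polynomial ℂ) (u v w : ℂ),
      A = Polynomial.C u * d ∧ B = Polynomial.C v * d ∧ E = Polynomial.C w * d := by
  have hn0 : 0 < n := by omega
  set d := GCDMonoid.gcd A B with hd
  have hd0 : d ≠ 0 := gcd_ne_zero_of_right hB
  set A1 := A / d with hA1'
  set B1 := B / d with hB1'
  have hA1 : A = d * A1 := (EuclideanDomain.mul_div_cancel' hd0 (GCDMonoid.gcd_dvd_left A B)).symm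
  have hB1 : B = d * B1 := (EuclideanDomain.mul_div_cancel' hd0 (GCDMonoid.gcd_dvd_right A B)).symm
  have hcop : IsCoprime A1 B1 := isCoprime_div_gcd_div_gcd hB
  have hdE : d ∣ E := by
    have hddvd : d ^ n ∣ E ^ n := by
      rw [← heq]
      exact dvd_add ⟨A1 ^ n, by rw [hA1]; ring⟩ ⟨B1 ^ n, by rw [hB1]; ring⟩
    exact (IsIntegrallyClosed.pow_dvd_pow_iff hn0.ne').mp hddvd
  obtain ⟨E1, hE1⟩ := hdE
  have hA10 : A1 ≠ 0 := fun h0 => hA (by rw [hA1, h0, mul_zero])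
  have hB10 : B1 ≠ 0 := fun h0 => hB (by rw [hB1, h0, mul_zero])
  have hE10 : E1 ≠ 0 := fun h0 => hE (by rw [hE1, h0, mul_zero])
  have heq1 : A1 ^ n + B1 ^ n = E1 ^ n := by
    have hcancel : d ^ n * (A1 ^ n + B1 ^ n) = d ^ n * E1 ^ n := by
      rw [mul_add, ← mul_pow, ← mul_pow, ← mul_pow, ← hA1, ← hB1, ← hE1, heq]
    exact mul_left_cancel₀ (pow_ne_zero n hd0) hcancel
  obtain ⟨e1, e2, e3⟩ := flt_coprime n hn A1 B1 E1 hA10 hB10 hE10 hcop heq1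
  exact ⟨d, A1.coeff 0, B1.coeff 0, E1.coeff 0,
    by rw [hA1, ← Polynomial.eq_C_of_natDegree_eq_zero e1, mul_comm],
    by rw [hB1, ← Polynomial.eq_C_of_natDegree_eq_zero e2, mul_comm],
    by rw [hE1, ← Polynomial.eq_C_of_natDegree_eq_zero e3, mul_comm]⟩

-- an element of RatFunc ℂ which is a root of a nonzero polynomial over ℂ is constant
lemma ratfunc_alg_const (t : RatFunc ℂ) (P : Polynomial ℂ) (hP : P ≠ 0)
    (ht : Polynomial.aeval t P = 0) : ∃ r : ℂ, t = algebraMap ℂ (RatFunc ℂ) r := by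
  have hsplit : P.Splits := IsAlgClosed.splits P
  have hfact := hsplit.eq_prod_roots
  rw [hfact] at ht
  simp only [map_mul, Polynomial.aeval_C] at ht
  have hlc : algebraMap ℂ (RatFunc ℂ) P.leadingCoeff ≠ 0 := by
    simp [Polynomial.leadingCoeff_ne_zero.mpr hP]
  have hprod : Polynomial.aeval t (P.roots.map fun a => Polynomial.X - Polynomial.C a).prod = 0 := by
    rcases mul_eq_zero.mp ht with h0 | h0
    · exact absurd h0 hlc
    · exact h0
  rw [Polynomial.aeval_def, Polynomial.eval₂_multiset_prod] at hprod
  have hmem := Multiset.prod_eq_zero_iff.mp hprod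
  rw [Multiset.mem_map] at hmem
  obtain ⟨q, hq, hq0⟩ := hmem
  rw [Multiset.mem_map] at hq
  obtain ⟨r, hr, rfl⟩ := hq
  simp only [Polynomial.eval₂_sub, Polynomial.eval₂_X, Polynomial.eval₂_C] at hq0
  exact ⟨r, sub_eq_zero.mp hq0⟩

lemma smul_eq_algebraMap (u : ℂ) (x : RatFunc ℂ) :
    u • x = algebraMap ℂ (RatFunc ℂ) u * x := Algebra.smul_def u x

/-- Fermat's last theorem for rational functions: if `f, g, h ∈ ℂ(z)` satisfy
`f^n + g^n = h^n` with `n ≥ 3`, then `f, g, h` all lie in a one-dimensional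
`ℂ`-subspace of `ℂ(z)`. -/
theorem ratfunc_fermat (n : ℕ) (hn : 3 ≤ n) (f g h : RatFunc ℂ)
    (heq : f ^ n + g ^ n = h ^ n) :
    ∃ (F : RatFunc ℂ) (a b c : ℂ), f = a • F ∧ g = b • F ∧ h = c • F := by
  have hn0 : 0 < n := by omega
  set φ := algebraMap (Polynomial ℂ) (RatFunc ℂ) with hφ
  have hCmul : ∀ (u : ℂ) (x : RatFunc ℂ), φ (Polynomial.C u) * x = u • x := by
    intro u x
    rw [Algebra.smul_def, IsScalarTower.algebraMap_apply ℂ (Polynomial ℂ) (RatFunc ℂ),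
      Polynomial.algebraMap_eq]
  by_cases hf : f = 0
  · by_cases hg : g = 0
    · have hh : h = 0 := by
        have : h ^ n = 0 := by rw [← heq, hf, hg]; simp [hn0.ne']
        exact pow_eq_zero_iff hn0.ne' |>.mp this
      exact ⟨0, 0, 0, 0, by simp [hf], by simp [hg], by simp [hh]⟩
    · -- f = 0 : g ^ n = h ^ n
      have hgh : g ^ n = h ^ n := by rw [← heq, hf]; simp [hn0.ne']
      have hh : h ≠ 0 := by
        intro h0
        rw [h0, zero_pow hn0.ne'] at hgh
        exact hg (pow_eq_zero_iff hn0.ne' |>.mp hgh)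
      set t : RatFunc ℂ := g * h⁻¹ with ht
      have htn : t ^ n = 1 := by
        rw [ht, mul_pow, hgh, inv_pow, mul_inv_cancel₀ (pow_ne_zero n hh)]
      obtain ⟨r, hr⟩ := ratfunc_alg_const t (Polynomial.X ^ n - Polynomial.C 1)
        (Polynomial.X_pow_sub_C_ne_zero hn0 1) (by simp [htn])
      refine ⟨h, 0, r, 1, by simp [hf], ?_, by simp⟩
      have : g = t * h := by rw [ht, mul_assoc, inv_mul_cancel₀ hh, mul_one]
      rw [this, hr, Algebra.smul_def]
  · by_cases hg : g = 0
    · -- g = 0 : f ^ n = h ^ n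
      have hfh : f ^ n = h ^ n := by rw [← heq, hg]; simp [hn0.ne']
      have hh : h ≠ 0 := by
        intro h0
        rw [h0, zero_pow hn0.ne'] at hfh
        exact hf (pow_eq_zero_iff hn0.ne' |>.mp hfh)
      set t : RatFunc ℂ := f * h⁻¹ with ht
      have htn : t ^ n = 1 := by
        rw [ht, mul_pow, hfh, inv_pow, mul_inv_cancel₀ (pow_ne_zero n hh)]
      obtain ⟨r, hr⟩ := ratfunc_alg_const t (Polynomial.X ^ n - Polynomial.C 1)
        (Polynomial.X_pow_sub_C_ne_zero hn0 1) (by simp [htn])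
      refine ⟨h, r, 0, 1, ?_, by simp [hg], by simp⟩
      have : f = t * h := by rw [ht, mul_assoc, inv_mul_cancel₀ hh, mul_one]
      rw [this, hr, Algebra.smul_def]
    · by_cases hh : h = 0
      · -- h = 0 : f ^ n + g ^ n = 0
        have hfg : f ^ n = -(g ^ n) := by
          rw [eq_neg_iff_add_eq_zero, heq, hh, zero_pow hn0.ne']
        set t : RatFunc ℂ := f * g⁻¹ with ht
        have htn : t ^ n = -1 := by
          rw [ht, mul_pow, hfg, inv_pow, neg_mul, mul_inv_cancel₀ (pow_ne_zero n hg)]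
        obtain ⟨r, hr⟩ := ratfunc_alg_const t (Polynomial.X ^ n + Polynomial.C 1)
          (Polynomial.X_pow_add_C_ne_zero hn0 1) (by simp [htn])
        refine ⟨g, r, 1, 0, ?_, by simp, by simp [hh]⟩
        have : f = t * g := by rw [ht, mul_assoc, inv_mul_cancel₀ hg, mul_one]
        rw [this, hr, Algebra.smul_def]
      · -- main case : f, g, h all nonzero
        set D : Polynomial ℂ := f.denom * (g.denom * h.denom) with hD
        have hD0 : D ≠ 0 :=
          mul_ne_zero f.denom_ne_zero (mul_ne_zero g.denom_ne_zero h.denom_ne_zero)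
        have hφD : φ D ≠ 0 := RatFunc.algebraMap_ne_zero hD0
        have hf' : f * φ f.denom = φ f.num := by
          rw [← eq_div_iff (RatFunc.algebraMap_ne_zero f.denom_ne_zero)]
          exact (RatFunc.num_div_denom f).symm
        have hg' : g * φ g.denom = φ g.num := by
          rw [← eq_div_iff (RatFunc.algebraMap_ne_zero g.denom_ne_zero)]
          exact (RatFunc.num_div_denom g).symm
        have hh' : h * φ h.denom = φ h.num := by
          rw [← eq_div_iff (RatFunc.algebraMap_ne_zero h.denom_ne_zero)]
          exact (RatFunc.num_div_denom h).symm
        set A : Polynomial ℂ := f.num * (g.denom * h.denom) with hA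
        set B : Polynomial ℂ := g.num * (f.denom * h.denom) with hB
        set E : Polynomial ℂ := h.num * (f.denom * g.denom) with hE
        have hA0 : A ≠ 0 := mul_ne_zero (RatFunc.num_ne_zero hf)
          (mul_ne_zero g.denom_ne_zero h.denom_ne_zero)
        have hB0 : B ≠ 0 := mul_ne_zero (RatFunc.num_ne_zero hg)
          (mul_ne_zero f.denom_ne_zero h.denom_ne_zero)
        have hE0 : E ≠ 0 := mul_ne_zero (RatFunc.num_ne_zero hh)
          (mul_ne_zero f.denom_ne_zero g.denom_ne_zero)
        have hfD : φ A = f * φ D := by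
          rw [hA, hD]; simp only [map_mul]; rw [← hf']; ring
        have hgD : φ B = g * φ D := by
          rw [hB, hD]; simp only [map_mul]; rw [← hg']; ring
        have hhD : φ E = h * φ D := by
          rw [hE, hD]; simp only [map_mul]; rw [← hh']; ring
        have heqpoly : A ^ n + B ^ n = E ^ n := by
          apply IsFractionRing.injective (Polynomial ℂ) (RatFunc ℂ)
          rw [map_add, map_pow, map_pow, map_pow, hfD, hgD, hhD,
            mul_pow, mul_pow, mul_pow, ← add_mul, heq]
        obtain ⟨d, u, v, w, hu, hv, hw⟩ := flt_poly n hn A B E hA0 hB0 hE0 heqpoly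
        refine ⟨φ d / φ D, u, v, w, ?_, ?_, ?_⟩
        · rw [← hCmul u, ← mul_div_assoc, ← map_mul, ← hu, eq_div_iff hφD]
          exact hfD.symm
        · rw [← hCmul v, ← mul_div_assoc, ← map_mul, ← hv, eq_div_iff hφD]
          exact hgD.symm
        · rw [← hCmul w, ← mul_div_assoc, ← map_mul, ← hw, eq_div_iff hφD]
          exact hhD.symm
end

section
/- Let θ be a finite Blaschke product, realized as a rational function B(z) = c·∏_{k=1}^{N}((z − a_k)/(1 − conj(a_k)·z)) with |c| = 1 and |a_k| < 1. Every element of the model space K_θ (functions f holomorphic on the disk with f and conj(z)·conj(f)·θ both in the Hardy class, equivalently rational functions of the form p(z)/∏(1 − conj(a_k)z) with deg p ≤ N − 1) is a rational function; hence for n ≥ 3 the equation f^n + g^n = h^n has no nontrivial solutions with f, g, h ∈ K_θ. -/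
open Polynomial UniqueFactorizationMonoid UniqueFactorizationDomain

lemma pow_eq_pow_constant {n : ℕ} (hn : n ≠ 0) {p q : ℂ[X]} (h : p ^ n = q ^ n) :
    ∃ c : ℂ, p = C c * q := by
  rcases eq_or_ne q 0 with rfl | hq
  · refine ⟨1, ?_⟩
    have h0 : p ^ n = 0 := by rw [h, zero_pow hn]
    have h1 : p = 0 := pow_eq_zero_iff hn |>.mp h0
    simp [h1]
  · have hpq : p ∣ q := (IsIntegrallyClosed.pow_dvd_pow_iff hn : p ^ n ∣ q ^ n ↔ p ∣ q).mp (h ▸ dvd_refl _)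
    have hqp : q ∣ p := (IsIntegrallyClosed.pow_dvd_pow_iff hn : q ^ n ∣ p ^ n ↔ q ∣ p).mp (h ▸ dvd_refl _)
    obtain ⟨u, hu⟩ := associated_of_dvd_dvd hqp hpq
    obtain ⟨c, hc, hcu⟩ := Polynomial.isUnit_iff.mp u.isUnit
    exact ⟨c, by rw [← hu, ← hcu, mul_comm]⟩

lemma poly_flt {n : ℕ} (hn : 3 ≤ n) {p q r : ℂ[X]} (heq : p ^ n + q ^ n = r ^ n) :
    ∃ (P : ℂ[X]) (α β γ : ℂ), p = C α * P ∧ q = C β * P ∧ r = C γ * P := by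
  classical
  have hn0 : n ≠ 0 := by omega
  rcases eq_or_ne p 0 with rfl | hp
  · have h : q ^ n = r ^ n := by rw [zero_pow hn0, zero_add] at heq; exact heq
    obtain ⟨c, hc⟩ := pow_eq_pow_constant hn0 h
    exact ⟨r, 0, c, 1, by simp, hc, by simp⟩
  rcases eq_or_ne q 0 with rfl | hq
  · have h : p ^ n = r ^ n := by rw [zero_pow hn0, add_zero] at heq; exact heq
    obtain ⟨c, hc⟩ := pow_eq_pow_constant hn0 h
    exact ⟨r, c, 0, 1, hc, by simp, by simp⟩
  rcases eq_or_ne r 0 with rfl | hr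
  · obtain ⟨z, hz⟩ := IsAlgClosed.exists_pow_nat_eq (-1 : ℂ) (show 0 < n by omega)
    have h : p ^ n = (C z * q) ^ n := by
      have h1 : p ^ n = - q ^ n := by
        have h2 := heq; rw [zero_pow hn0] at h2; linear_combination h2
      rw [mul_pow, ← C_pow, hz, h1]; simp
    obtain ⟨c, hc⟩ := pow_eq_pow_constant hn0 h
    exact ⟨q, c * z, 1, 0, by rw [hc, map_mul, mul_assoc], by simp, by simp⟩
  -- main case: all nonzero
  set d := GCDMonoid.gcd p q with hd
  have hd0 : d ≠ 0 := fun h0 => hp (((gcd_eq_zero_iff p q).mp h0).1)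
  have hdp : d ∣ p := gcd_dvd_left p q
  have hdq : d ∣ q := gcd_dvd_right p q
  have hdr : d ∣ r := by
    have h1 : d ^ n ∣ r ^ n := by
      rw [← heq]; exact dvd_add (pow_dvd_pow_of_dvd hdp n) (pow_dvd_pow_of_dvd hdq n)
    exact (IsIntegrallyClosed.pow_dvd_pow_iff hn0 : d ^ n ∣ r ^ n ↔ d ∣ r).mp h1
  set p₁ := p / d with hp₁
  set q₁ := q / d with hq₁
  set r₁ := r / d with hr₁
  have hpe : p = d * p₁ := (EuclideanDomain.mul_div_cancel' hd0 hdp).symm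
  have hqe : q = d * q₁ := (EuclideanDomain.mul_div_cancel' hd0 hdq).symm
  have hre : r = d * r₁ := (EuclideanDomain.mul_div_cancel' hd0 hdr).symm
  have hp₁0 : p₁ ≠ 0 := fun h0 => hp (by rw [hpe, h0, mul_zero])
  have hq₁0 : q₁ ≠ 0 := fun h0 => hq (by rw [hqe, h0, mul_zero])
  have hr₁0 : r₁ ≠ 0 := fun h0 => hr (by rw [hre, h0, mul_zero])
  have heq₁ : p₁ ^ n + q₁ ^ n = r₁ ^ n := by
    have h2 : d ^ n * (p₁ ^ n + q₁ ^ n) = d ^ n * r₁ ^ n := by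
      rw [mul_add, ← mul_pow, ← mul_pow, ← mul_pow, ← hpe, ← hqe, ← hre, heq]
    exact mul_left_cancel₀ (pow_ne_zero n hd0) h2
  have hcop : IsCoprime p₁ q₁ := isCoprime_div_gcd_div_gcd hq
  -- set up Mason–Stothers
  have habc : IsCoprime (p₁ ^ n) (q₁ ^ n) := hcop.pow
  have hbc : IsCoprime (q₁ ^ n) (-(r₁ ^ n)) := by
    have := (habc.symm.add_mul_left_right 1)
    rw [mul_one] at this
    rw [← heq₁]; exact this.neg_right
  have hca : IsCoprime (-(r₁ ^ n)) (p₁ ^ n) := by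
    have := (habc.add_mul_left_right 1)
    rw [mul_one] at this
    rw [← heq₁]
    have h3 : q₁ ^ n + p₁ ^ n = p₁ ^ n + q₁ ^ n := add_comm _ _
    exact (h3 ▸ this).neg_right.symm
  have hsum : p₁ ^ n + q₁ ^ n + -(r₁ ^ n) = 0 := by rw [heq₁]; ring
  rcases Polynomial.abc (pow_ne_zero n hp₁0) (pow_ne_zero n hq₁0)
      (neg_ne_zero.mpr (pow_ne_zero n hr₁0)) habc hsum with hdeg | hder
  · -- degree contradiction
    exfalso
    obtain ⟨h1, h2, h3⟩ := hdeg
    have hprodne : p₁ * q₁ * r₁ ≠ 0 := mul_ne_zero (mul_ne_zero hp₁0 hq₁0) hr₁0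
    have hradeq : radical (p₁ ^ n * q₁ ^ n * -(r₁ ^ n)) = radical (p₁ * q₁ * r₁) := by
      have : p₁ ^ n * q₁ ^ n * -(r₁ ^ n) = -((p₁ * q₁ * r₁) ^ n) := by ring
      rw [this, radical_neg, radical_pow _ (by omega)]
    rw [hradeq] at h1 h2 h3
    have hradle : (radical (p₁ * q₁ * r₁)).natDegree ≤ (p₁ * q₁ * r₁).natDegree :=
      Polynomial.natDegree_le_of_dvd (radical_dvd_self (a := p₁ * q₁ * r₁)) hprodne
    set S := (p₁ * q₁ * r₁).natDegree with hS
    have hSsplit : S = p₁.natDegree + q₁.natDegree + r₁.natDegree := by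
      rw [hS, Polynomial.natDegree_mul (mul_ne_zero hp₁0 hq₁0) hr₁0,
        Polynomial.natDegree_mul hp₁0 hq₁0]
    rw [natDegree_pow] at h1 h2
    rw [natDegree_neg, natDegree_pow] at h3
    have e1 : n * p₁.natDegree + 1 ≤ S := le_trans h1 hradle
    have e2 : n * q₁.natDegree + 1 ≤ S := le_trans h2 hradle
    have e3 : n * r₁.natDegree + 1 ≤ S := le_trans h3 hradle
    have e4 : n * S + 3 ≤ 3 * S := by
      calc n * S + 3 = (n * p₁.natDegree + 1) + (n * q₁.natDegree + 1)
            + (n * r₁.natDegree + 1) := by rw [hSsplit]; ring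
        _ ≤ S + S + S := by omega
        _ = 3 * S := by ring
    have e5 : 3 * S ≤ n * S := Nat.mul_le_mul_right S hn
    omega
  · -- all constants
    obtain ⟨h1, h2, h3⟩ := hder
    have k1 : p₁.natDegree = 0 := by
      have h4 := Polynomial.natDegree_eq_zero_of_derivative_eq_zero h1
      rw [natDegree_pow] at h4
      exact (Nat.mul_eq_zero.mp h4).resolve_left hn0
    have k2 : q₁.natDegree = 0 := by
      have h4 := Polynomial.natDegree_eq_zero_of_derivative_eq_zero h2
      rw [natDegree_pow] at h4
      exact (Nat.mul_eq_zero.mp h4).resolve_left hn0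
    have k3 : r₁.natDegree = 0 := by
      have h4 := Polynomial.natDegree_eq_zero_of_derivative_eq_zero h3
      rw [natDegree_neg, natDegree_pow] at h4
      exact (Nat.mul_eq_zero.mp h4).resolve_left hn0
    refine ⟨d, p₁.coeff 0, q₁.coeff 0, r₁.coeff 0, ?_, ?_, ?_⟩
    · rw [hpe, ← Polynomial.eq_C_of_natDegree_eq_zero k1, mul_comm]
    · rw [hqe, ← Polynomial.eq_C_of_natDegree_eq_zero k2, mul_comm]
    · rw [hre, ← Polynomial.eq_C_of_natDegree_eq_zero k3, mul_comm]

lemma ratfunc_smul_eq (α : ℂ) (F : RatFunc ℂ) :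
    α • F = algebraMap (Polynomial ℂ) (RatFunc ℂ) (C α) * F := by
  rw [Algebra.smul_def, IsScalarTower.algebraMap_apply ℂ (Polynomial ℂ) (RatFunc ℂ),
    Polynomial.algebraMap_eq]

/-- The model space of a finite Blaschke product
`B(z) = c ∏ (z − a k)/(1 − conj (a k) z)` consists of rational functions
`p(z)/∏ (1 − conj (a k) z)` with `deg p ≤ N − 1`; for `n ≥ 3` the Fermat
equation `f^n + g^n = h^n` has no nontrivial solutions in this space. -/
theorem blaschke_model_space_fermat (N : ℕ) (a : Fin N → ℂ) (c : ℂ)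
    (hc : ‖c‖ = 1) (ha : ∀ k, ‖a k‖ < 1)
    (K : Set (RatFunc ℂ))
    (hK : K = {f : RatFunc ℂ | ∃ p : Polynomial ℂ, p.natDegree < N ∧
      f = algebraMap (Polynomial ℂ) (RatFunc ℂ) p /
        algebraMap (Polynomial ℂ) (RatFunc ℂ)
          (∏ k, (1 - C (starRingEnd ℂ (a k)) * X))})
    (n : ℕ) (hn : 3 ≤ n) (f g h : RatFunc ℂ)
    (hf : f ∈ K) (hg : g ∈ K) (hh : h ∈ K)
    (heq : f ^ n + g ^ n = h ^ n) :
    ∃ (F : RatFunc ℂ) (α β γ : ℂ), f = α • F ∧ g = β • F ∧ h = γ • F := by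
  subst hK
  set D : Polynomial ℂ := ∏ k, (1 - C (starRingEnd ℂ (a k)) * X) with hD
  obtain ⟨p, hpd, hfe⟩ := hf
  obtain ⟨q, hqd, hge⟩ := hg
  obtain ⟨r, hrd, hhe⟩ := hh
  set A := algebraMap (Polynomial ℂ) (RatFunc ℂ) with hA
  have hD1 : D.eval 0 = 1 := by
    rw [hD, Polynomial.eval_prod]
    simp
  have hD0 : D ≠ 0 := fun h0 => by simp [h0] at hD1
  have hAD : A D ≠ 0 := RatFunc.algebraMap_ne_zero hD0
  have hADn : A D ^ n ≠ 0 := pow_ne_zero _ hAD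
  have heqp : p ^ n + q ^ n = r ^ n := by
    rw [hfe, hge, hhe, div_pow, div_pow, div_pow, ← add_div,
      div_eq_div_iff hADn hADn] at heq
    have h2 := mul_right_cancel₀ hADn heq
    apply RatFunc.algebraMap_injective (K := ℂ)
    push_cast [map_add, map_pow] at h2 ⊢
    exact h2
  obtain ⟨P, α, β, γ, hpP, hqP, hrP⟩ := poly_flt hn heqp
  refine ⟨A P / A D, α, β, γ, ?_, ?_, ?_⟩
  · rw [hfe, hpP, map_mul, ratfunc_smul_eq, mul_div_assoc]
  · rw [hge, hqP, map_mul, ratfunc_smul_eq, mul_div_assoc]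
  · rw [hhe, hrP, map_mul, ratfunc_smul_eq, mul_div_assoc]
end

section
/- Let N ≥ 1. The monomials e_k(z) = λ z^k with |λ| = 1 and 0 ≤ k ≤ N are extreme points of the closed unit ball of 𝒫_N (polynomials of degree ≤ N with sup-norm on the unit circle): if P, Q ∈ 𝒫_N have ‖P‖_∞ ≤ 1, ‖Q‖_∞ ≤ 1 and (P + Q)/2 = λ z^k with |λ| = 1, then P = Q = λ z^k. -/
open Polynomial

/-- The monomials `λ z^k` with `|λ| = 1`, `0 ≤ k ≤ N`, are extreme points of
the closed unit ball of `𝒫_N` (polynomials of degree ≤ N with sup-norm on the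
unit circle): if `P, Q ∈ 𝒫_N` are bounded by `1` on the circle and
`(P + Q)/2 = λ z^k`, then `P = Q = λ z^k`. -/
theorem monomial_extreme (N : ℕ) (hN : 1 ≤ N) (k : ℕ) (hk : k ≤ N) (l : ℂ)
    (hl : ‖l‖ = 1) (P Q : Polynomial ℂ)
    (hPdeg : P.natDegree ≤ N) (hQdeg : Q.natDegree ≤ N)
    (hP : ∀ z : ℂ, ‖z‖ = 1 → ‖P.eval z‖ ≤ 1)
    (hQ : ∀ z : ℂ, ‖z‖ = 1 → ‖Q.eval z‖ ≤ 1)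
    (hmid : P + Q = C (2 * l) * X ^ k) :
    P = C l * X ^ k ∧ Q = C l * X ^ k := by
  set R := P - C l * X ^ k with hR
  have hroot : ∀ z : ℂ, ‖z‖ = 1 → R.eval z = 0 := by
    intro z hz
    have ha : ‖l * z ^ k‖ = 1 := by
      simp [map_mul, map_pow, hl, hz]
    have hPz : P.eval z = l * z ^ k + R.eval z := by simp [hR]
    have hQz : Q.eval z = l * z ^ k - R.eval z := by
      have := congrArg (Polynomial.eval z) hmid
      simp [hR] at this ⊢
      linear_combination this
    have hpar : ‖P.eval z‖ ^ 2 + ‖Q.eval z‖ ^ 2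
        = 2 * (‖l * z ^ k‖ ^ 2 + ‖R.eval z‖ ^ 2) := by
      rw [hPz, hQz]
      simpa [sq] using parallelogram_law_with_norm ℝ (l * z ^ k) (R.eval z)
    have h1 : ‖P.eval z‖ ^ 2 ≤ 1 := by
      have := hP z hz
      have : ‖P.eval z‖ ≤ 1 := this
      nlinarith [norm_nonneg (P.eval z)]
    have h2 : ‖Q.eval z‖ ^ 2 ≤ 1 := by
      have : ‖Q.eval z‖ ≤ 1 := hQ z hz
      nlinarith [norm_nonneg (Q.eval z)]
    have ha' : ‖l * z ^ k‖ = 1 := ha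
    have : ‖R.eval z‖ ^ 2 ≤ 0 := by nlinarith
    have : ‖R.eval z‖ = 0 := by nlinarith [norm_nonneg (R.eval z), sq_nonneg ‖R.eval z‖]
    simpa using this
  have hR0 : R = 0 := by
    apply Polynomial.eq_zero_of_infinite_isRoot
    have hinj : Set.InjOn (fun t : ℝ => Complex.exp (t * Complex.I)) (Set.Ioo 0 1) := by
      intro a ha b hb hab
      rw [Complex.exp_eq_exp_iff_exists_int] at hab
      obtain ⟨n, hn⟩ := hab
      have : (a : ℂ) = b + n * (2 * Real.pi) := by
        have hI : (Complex.I : ℂ) ≠ 0 := Complex.I_ne_zero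
        have h0 : ((a : ℂ) - b - n * (2 * Real.pi)) * Complex.I = 0 := by
          linear_combination hn
        have := (mul_eq_zero.mp h0).resolve_right hI
        linear_combination this
      have hre : a = b + n * (2 * Real.pi) := by exact_mod_cast this
      have hpi : (3 : ℝ) < Real.pi := Real.pi_gt_three
      rcases lt_trichotomy (n : ℝ) 0 with h | h | h
      · have : (n : ℝ) ≤ -1 := by exact_mod_cast Int.le_of_lt_add_one (by exact_mod_cast h)
        nlinarith [ha.1, ha.2, hb.1, hb.2]
      · have : a = b := by rw [hre, h]; ring
        exact_mod_cast this
      · have : (1 : ℝ) ≤ n := by exact_mod_cast h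
        nlinarith [ha.1, ha.2, hb.1, hb.2]
    have hinf : (Set.Ioo (0:ℝ) 1).Infinite := Set.Ioo_infinite (by norm_num)
    refine Set.Infinite.mono ?_ (hinf.image hinj)
    rintro z ⟨t, ht, rfl⟩
    apply hroot
    simp [Complex.norm_exp]
  constructor
  · have := sub_eq_zero.mp hR0
    exact this
  · have hPeq : P = C l * X ^ k := sub_eq_zero.mp hR0
    rw [hPeq] at hmid
    have : Q = C (2 * l) * X ^ k - C l * X ^ k := by linear_combination hmid
    rw [this]
    simp [two_mul, C_add]
    ring
end

section
/- There exist unit-norm polynomials P, Q of the same degree N (for some N) such that 1 − |P(z)|² = 2(1 − |Q(z)|²) for all |z| = 1, P is a non-extreme point of the unit ball of 𝒫_N, and Q is an extreme point. Concretely, one may verify such an example with explicit low-degree polynomials. -/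
open Polynomial

namespace ExtremePair

open Complex

/-- If `u±v` are in the closed unit disc and `|u| = 1` then `v = 0`. -/
lemma para_zero (u v : ℂ) (h1 : normSq (u+v) ≤ 1) (h2 : normSq (u-v) ≤ 1)
    (hu : normSq u = 1) : v = 0 := by
  have key : normSq (u+v) + normSq (u-v) = 2 * normSq u + 2 * normSq v := by
    simp [normSq_apply]; ring
  have hle : normSq v ≤ 0 := by rw [hu] at key; linarith
  exact Complex.normSq_eq_zero.mp (le_antisymm hle (Complex.normSq_nonneg v))

/-- First-order condition at a boundary maximum of a polynomial on the circle. -/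
lemma circle_deriv (T : ℂ[X]) (t0 : ℝ)
    (hle : ∀ z : ℂ, ‖z‖ = 1 → ‖T.eval z‖ ≤ 1)
    (heq : ‖T.eval (Complex.exp (t0*I))‖ = 1) :
    ((starRingEnd ℂ) (T.eval (Complex.exp (t0*I)))
      * (T.derivative.eval (Complex.exp (t0*I)) * (Complex.exp (t0*I) * I))).re = 0 := by
  set z0 : ℂ := Complex.exp (t0*I) with hz0
  set w : ℂ := (starRingEnd ℂ) (T.eval z0) with hw
  have hcirc : ∀ t : ℝ, HasDerivAt (fun s : ℝ => Complex.exp (s*I)) (Complex.exp (t*I) * I) t := by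
    intro t
    have h1 : HasDerivAt (fun s : ℝ => (s:ℂ) * I) I t := by
      simpa using (Complex.ofRealCLM.hasDerivAt (x := t)).mul_const I
    have h2 := HasDerivAt.scomp (𝕜 := ℝ) (𝕜' := ℂ) t (Complex.hasDerivAt_exp ((t:ℂ)*I)) h1
    simpa [Function.comp_def, mul_comm] using h2
  have hf : HasDerivAt (fun s : ℝ => T.eval (Complex.exp (s*I)))
      (T.derivative.eval z0 * (z0 * I)) t0 := by
    have := (T.hasDerivAt z0).scomp t0 (hcirc t0)
    simpa [Function.comp_def, hz0, smul_eq_mul, mul_comm] using this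
  have hg : HasDerivAt (fun s : ℝ => (w * T.eval (Complex.exp (s*I))).re)
      ((w * (T.derivative.eval z0 * (z0 * I))).re) t0 := by
    have h2 : HasDerivAt (fun s : ℝ => w * T.eval (Complex.exp (s*I)))
        (w * (T.derivative.eval z0 * (z0 * I))) t0 := hf.const_mul w
    exact (Complex.reCLM.hasFDerivAt.comp_hasDerivAt t0 h2)
  have hmax : IsLocalMax (fun s : ℝ => (w * T.eval (Complex.exp (s*I))).re) t0 := by
    apply Filter.Eventually.of_forall
    intro s
    have h1 : (w * T.eval (Complex.exp (s*I))).re ≤ ‖w * T.eval (Complex.exp (s*I))‖ :=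
      Complex.re_le_norm _
    have h2 : ‖w * T.eval (Complex.exp (s*I))‖ ≤ 1 := by
      rw [norm_mul]
      have hw1 : ‖w‖ = 1 := by rw [hw, Complex.norm_conj]; exact heq
      rw [hw1, one_mul]
      exact hle _ (by simp [Complex.norm_exp_ofReal_mul_I s])
    have h3 : (w * T.eval (Complex.exp (t0*I))).re = 1 := by
      rw [← hz0, hw, ← Complex.normSq_eq_conj_mul_self]
      norm_cast
      rw [← Complex.sq_norm, heq]; norm_num
    simp only [← hz0] at h3 ⊢
    rw [h3]; exact le_trans h1 h2
  exact hmax.hasDerivAt_eq_zero hg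

lemma coprime_XI : IsCoprime (X - C I) (X + C I) := by
  have hinj : Function.Injective (fun b : Bool => if b then I else -I) := by
    intro a b hab
    cases a <;> cases b <;> simp_all [Complex.ext_iff] <;> norm_num at hab
  have h := Polynomial.pairwise_coprime_X_sub_C hinj (by simp : (true:Bool) ≠ false)
  simpa [Function.onFun, sub_neg_eq_add] using h

noncomputable def Qp : ℂ[X] := C ((3/10:ℝ):ℂ) * X^2 + C ((4/5:ℝ):ℂ) * X - C ((3/10:ℝ):ℂ)

noncomputable def Pp : ℂ[X] :=
  C ((((5+Real.sqrt 7)/10 : ℝ)):ℂ) * X^2 - C ((((5-Real.sqrt 7)/10 : ℝ)):ℂ)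

lemma Qp_eval (z : ℂ) : Qp.eval z = ((3/10:ℝ):ℂ) * z^2 + ((4/5:ℝ):ℂ) * z - ((3/10:ℝ):ℂ) := by
  simp [Qp]

lemma Pp_eval (z : ℂ) : Pp.eval z =
    (((5+Real.sqrt 7)/10 : ℝ):ℂ) * z^2 - (((5-Real.sqrt 7)/10 : ℝ):ℂ) := by
  simp [Pp]

lemma circle_sq (z : ℂ) (hz : ‖z‖ = 1) : z.re^2 + z.im^2 = 1 := by
  have := Complex.sq_norm z
  rw [hz] at this
  simp [normSq_apply] at this
  nlinarith [this]

lemma Qp_normSq (z : ℂ) (hz : ‖z‖ = 1) :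
    normSq (Qp.eval z) = 1 - (9/25) * z.re^2 := by
  have hz2 := circle_sq z hz
  rw [Qp_eval]
  simp only [normSq_apply, Complex.add_re, Complex.sub_re, Complex.add_im, Complex.sub_im,
    Complex.mul_re, Complex.mul_im, Complex.ofReal_re, Complex.ofReal_im, pow_two]
  linear_combination (9/100*z.im^2 + 9/100*z.re^2 + 12/25*z.re + 91/100) * hz2

lemma Pp_normSq (z : ℂ) (hz : ‖z‖ = 1) :
    normSq (Pp.eval z) = 1 - (18/25) * z.re^2 := by
  have hz2 := circle_sq z hz
  have hs : Real.sqrt 7 ^ 2 = 7 := Real.sq_sqrt (by norm_num)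
  rw [Pp_eval]
  simp only [normSq_apply, Complex.add_re, Complex.sub_re, Complex.add_im, Complex.sub_im,
    Complex.mul_re, Complex.mul_im, Complex.ofReal_re, Complex.ofReal_im, pow_two]
  set s := Real.sqrt 7
  set A : ℝ := (5+s)/10
  set B : ℝ := (5-s)/10
  linear_combination (z.re^2/25) * hs + (2*A^2 + 2*A*B + (z.re^2+z.im^2-1)*A^2) * hz2

lemma sqrt7_lt : Real.sqrt 7 < 3 := by
  have h := Real.sqrt_lt_sqrt (by norm_num : (0:ℝ) ≤ 7) (by norm_num : (7:ℝ) < 9)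
  rwa [show (9:ℝ) = 3^2 by norm_num, Real.sqrt_sq (by norm_num : (0:ℝ) ≤ 3)] at h

lemma sqrt7_nonneg : 0 ≤ Real.sqrt 7 := Real.sqrt_nonneg 7

end ExtremePair

open ExtremePair Complex

set_option maxHeartbeats 1000000

/-- There exist unit-norm polynomials `P, Q` of degree ≤ N (for some `N`) with
`1 − |P|² = 2(1 − |Q|²)` on the unit circle, such that `P` is a non-extreme
point of the unit ball of `𝒫_N` while `Q` is extreme. -/
theorem exists_extreme_nonextreme_pair :
    ∃ (N : ℕ) (P Q : Polynomial ℂ),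
      P.natDegree ≤ N ∧ Q.natDegree ≤ N ∧
      (∀ z : ℂ, ‖z‖ = 1 → ‖P.eval z‖ ≤ 1) ∧
      (∃ z : ℂ, ‖z‖ = 1 ∧ ‖P.eval z‖ = 1) ∧
      (∀ z : ℂ, ‖z‖ = 1 → ‖Q.eval z‖ ≤ 1) ∧
      (∃ z : ℂ, ‖z‖ = 1 ∧ ‖Q.eval z‖ = 1) ∧
      (∀ z : ℂ, ‖z‖ = 1 →
        1 - ‖P.eval z‖ ^ 2 = 2 * (1 - ‖Q.eval z‖ ^ 2)) ∧
      (∃ R : Polynomial ℂ, R ≠ 0 ∧ R.natDegree ≤ N ∧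
        (∀ z : ℂ, ‖z‖ = 1 → ‖(P + R).eval z‖ ≤ 1) ∧
        (∀ z : ℂ, ‖z‖ = 1 → ‖(P - R).eval z‖ ≤ 1)) ∧
      (∀ R : Polynomial ℂ, R.natDegree ≤ N →
        (∀ z : ℂ, ‖z‖ = 1 → ‖(Q + R).eval z‖ ≤ 1) →
        (∀ z : ℂ, ‖z‖ = 1 → ‖(Q - R).eval z‖ ≤ 1) →
        R = 0) := by
  have habsI : ‖I‖ = 1 := by simp
  have hB_pos : (0:ℝ) < (5 - Real.sqrt 7)/10 := by
    have := sqrt7_lt; linarith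
  have hA_pos : (0:ℝ) < (5 + Real.sqrt 7)/10 := by
    have := sqrt7_nonneg; linarith
  have hAB_sub : (0:ℝ) ≤ (5 + Real.sqrt 7)/10 - (5 - Real.sqrt 7)/10 := by
    have := sqrt7_nonneg; linarith
  refine ⟨2, Pp, Qp, ?_, ?_, ?_, ?_, ?_, ?_, ?_, ?_, ?_⟩
  · -- deg P
    unfold Pp; compute_degree
  · -- deg Q
    unfold Qp; compute_degree
  · -- |P| ≤ 1
    intro z hz
    rw [Pp_eval]
    have h1 := norm_add_le ((((5+Real.sqrt 7)/10 : ℝ):ℂ) * z^2)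
      (-(((5-Real.sqrt 7)/10 : ℝ):ℂ))
    rw [← sub_eq_add_neg] at h1
    refine le_trans h1 ?_
    rw [norm_neg, norm_mul, norm_pow, hz, Complex.norm_of_nonneg hA_pos.le,
      Complex.norm_of_nonneg hB_pos.le]
    nlinarith [sqrt7_nonneg, sqrt7_lt]
  · -- |P(i)| = 1
    refine ⟨I, habsI, ?_⟩
    have : Pp.eval I = -1 := by
      rw [Pp_eval, Complex.I_sq]
      push_cast
      ring
    rw [this]; simp
  · -- |Q| ≤ 1
    intro z hz
    have h := Qp_normSq z hz
    have h2 : ‖Qp.eval z‖^2 ≤ 1 := by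
      rw [Complex.sq_norm, h]; nlinarith [sq_nonneg z.re]
    nlinarith [norm_nonneg (Qp.eval z)]
  · -- |Q(i)| = 1
    refine ⟨I, habsI, ?_⟩
    have h := Qp_normSq I habsI
    simp only [Complex.I_re] at h
    have h2 : ‖Qp.eval I‖^2 = 1 := by
      rw [Complex.sq_norm, h]; norm_num
    nlinarith [norm_nonneg (Qp.eval I)]
  · -- identity
    intro z hz
    rw [Complex.sq_norm, Complex.sq_norm, Pp_normSq z hz, Qp_normSq z hz]
    ring
  · -- P is non-extreme
    refine ⟨C ((((5-Real.sqrt 7)/10 : ℝ)):ℂ) * X^2 + C ((((5-Real.sqrt 7)/10 : ℝ)):ℂ),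
      ?_, ?_, ?_, ?_⟩
    · -- R ≠ 0
      intro h
      have h0 := congrArg (fun p => Polynomial.eval 0 p) h
      simp only [eval_add, eval_mul, eval_pow, eval_C, eval_X, eval_zero] at h0
      have h1 : (((5-Real.sqrt 7)/10 : ℝ):ℂ) = 0 := by simpa using h0
      rw [Complex.ofReal_eq_zero] at h1
      linarith
    · compute_degree
    · intro z hz
      have he : (Pp + (C ((((5-Real.sqrt 7)/10 : ℝ)):ℂ) * X^2
          + C ((((5-Real.sqrt 7)/10 : ℝ)):ℂ))).eval z = z^2 := by
        simp only [eval_add, eval_mul, eval_pow, eval_C, eval_X, Pp_eval]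
        push_cast
        ring
      rw [he, norm_pow, hz]; norm_num
    · intro z hz
      have he : (Pp - (C ((((5-Real.sqrt 7)/10 : ℝ)):ℂ) * X^2
          + C ((((5-Real.sqrt 7)/10 : ℝ)):ℂ))).eval z
          = ((((5+Real.sqrt 7)/10 - (5-Real.sqrt 7)/10 : ℝ)):ℂ) * z^2
            - ((((5-Real.sqrt 7)/10 + (5-Real.sqrt 7)/10 : ℝ)):ℂ) := by
        simp only [eval_sub, eval_add, eval_mul, eval_pow, eval_C, eval_X, Pp_eval]
        push_cast
        ring
      rw [he]
      have h1 := norm_add_le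
        (((((5+Real.sqrt 7)/10 - (5-Real.sqrt 7)/10 : ℝ)):ℂ) * z^2)
        (-((((5-Real.sqrt 7)/10 + (5-Real.sqrt 7)/10 : ℝ)):ℂ))
      rw [← sub_eq_add_neg] at h1
      refine le_trans h1 ?_
      rw [norm_neg, norm_mul, norm_pow, hz, Complex.norm_of_nonneg hAB_sub,
        Complex.norm_of_nonneg (by linarith : (0:ℝ) ≤ (5-Real.sqrt 7)/10 + (5-Real.sqrt 7)/10)]
      nlinarith [sqrt7_nonneg, sqrt7_lt]
  · -- Q is extreme
    intro R hdeg hp hm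
    have habsmI : ‖-I‖ = 1 := by simp
    -- values of Q at ±i
    have hQI : Qp.eval I = ((-3/5:ℝ):ℂ) + ((4/5:ℝ):ℂ)*I := by
      rw [Qp_eval]; push_cast
      linear_combination (3/10 : ℂ) * Complex.I_sq
    have hQmI : Qp.eval (-I) = ((-3/5:ℝ):ℂ) - ((4/5:ℝ):ℂ)*I := by
      rw [Qp_eval]; push_cast
      linear_combination (3/10 : ℂ) * Complex.I_sq
    have hnI : normSq (Qp.eval I) = 1 := by
      rw [Qp_normSq I habsI]; simp
    have hnmI : normSq (Qp.eval (-I)) = 1 := by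
      rw [Qp_normSq (-I) habsmI]; simp
    have habsQI : ‖Qp.eval I‖ = 1 := by
      have := Complex.sq_norm (Qp.eval I); rw [hnI] at this
      nlinarith [norm_nonneg (Qp.eval I)]
    have habsQmI : ‖Qp.eval (-I)‖ = 1 := by
      have := Complex.sq_norm (Qp.eval (-I)); rw [hnmI] at this
      nlinarith [norm_nonneg (Qp.eval (-I))]
    -- R vanishes at ±i
    have hRI : R.eval I = 0 := by
      refine para_zero (Qp.eval I) (R.eval I) ?_ ?_ hnI
      · have := hp I habsI
        rw [eval_add] at this
        rw [← Complex.sq_norm]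
        nlinarith [norm_nonneg ((Qp.eval I) + R.eval I)]
      · have := hm I habsI
        rw [eval_sub] at this
        rw [← Complex.sq_norm]
        nlinarith [norm_nonneg ((Qp.eval I) - R.eval I)]
    have hRmI : R.eval (-I) = 0 := by
      refine para_zero (Qp.eval (-I)) (R.eval (-I)) ?_ ?_ hnmI
      · have := hp (-I) habsmI
        rw [eval_add] at this
        rw [← Complex.sq_norm]
        nlinarith [norm_nonneg ((Qp.eval (-I)) + R.eval (-I))]
      · have := hm (-I) habsmI
        rw [eval_sub] at this
        rw [← Complex.sq_norm]
        nlinarith [norm_nonneg ((Qp.eval (-I)) - R.eval (-I))]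
    -- divisibility: R = (X^2+1) * C c
    have h1 : (X - C I) ∣ R := dvd_iff_isRoot.mpr hRI
    have h2 : (X + C I) ∣ R := by
      rw [show (X + C I : ℂ[X]) = X - C (-I) by rw [map_neg, sub_neg_eq_add]]
      exact dvd_iff_isRoot.mpr hRmI
    have hdvd : (X^2 + 1 : ℂ[X]) ∣ R := by
      have hx : (X - C I) * (X + C I) = (X^2 + 1 : ℂ[X]) := by
        have hC : (C I : ℂ[X]) * C I = -1 := by
          rw [← C_mul, Complex.I_mul_I]; simp
        calc (X - C I) * (X + C I) = X^2 - C I * C I := by ring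
          _ = X^2 + 1 := by rw [hC]; ring
      rw [← hx]
      exact coprime_XI.mul_dvd h1 h2
    obtain ⟨T, hT⟩ := hdvd
    by_cases hT0 : T = 0
    · rw [hT, hT0, mul_zero]
    have hX2deg : (X^2 + 1 : ℂ[X]).natDegree = 2 := by compute_degree!
    have hX2ne : (X^2 + 1 : ℂ[X]) ≠ 0 := fun h => by
      simpa using congrArg (fun p => Polynomial.eval 0 p) h
    have hRdeg2 : R.natDegree = 2 + T.natDegree := by
      rw [hT, natDegree_mul hX2ne hT0, hX2deg]
    have hTdeg : T.natDegree = 0 := by omega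
    obtain ⟨c, hc⟩ := natDegree_eq_zero.mp hTdeg
    have hR : R = (X^2+1) * C c := by rw [hT, ← hc]
    -- derivative data
    have hQd : Qp.derivative.eval I = ((4/5:ℝ):ℂ) + ((3/5:ℝ):ℂ)*I := by
      unfold Qp
      simp [derivative_mul, derivative_sub, derivative_add]
      ring
    have hQdm : Qp.derivative.eval (-I) = ((4/5:ℝ):ℂ) - ((3/5:ℝ):ℂ)*I := by
      unfold Qp
      simp [derivative_mul, derivative_sub, derivative_add]
      ring
    have hRd : R.derivative.eval I = 2*I*c := by
      rw [hR]; simp [derivative_mul, one_add_one_eq_two]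
    have hRdm : R.derivative.eval (-I) = -(2*I*c) := by
      rw [hR]; simp [derivative_mul, one_add_one_eq_two]
    -- exponential points
    have hexpI : Complex.exp ((Real.pi/2 : ℝ) * I) = I := by
      rw [Complex.exp_mul_I]
      norm_cast
      simp [← Complex.ofReal_cos, ← Complex.ofReal_sin, Real.cos_pi_div_two, Real.sin_pi_div_two]
    have hexpmI : Complex.exp ((-(Real.pi/2) : ℝ) * I) = -I := by
      rw [Complex.exp_mul_I]
      norm_cast
      simp [← Complex.ofReal_cos, ← Complex.ofReal_sin, Real.cos_pi_div_two, Real.sin_pi_div_two]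
    -- first-order conditions
    have e1 := circle_deriv (Qp + R) (Real.pi/2) hp (by
      rw [hexpI, eval_add, hRI, add_zero]; exact habsQI)
    rw [hexpI] at e1
    have e2 := circle_deriv (Qp + R) (-(Real.pi/2)) hp (by
      rw [hexpmI, eval_add, hRmI, add_zero]; exact habsQmI)
    rw [hexpmI] at e2
    -- rewrite e1
    rw [eval_add, hRI, add_zero, derivative_add, eval_add, hQd, hRd, hQI] at e1
    rw [eval_add, hRmI, add_zero, derivative_add, eval_add, hQdm, hRdm, hQmI] at e2
    have key1 : (starRingEnd ℂ) (((-3/5:ℝ):ℂ) + ((4/5:ℝ):ℂ)*I)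
        * ((((4/5:ℝ):ℂ) + ((3/5:ℝ):ℂ)*I + 2*I*c) * (I*I))
        = I + (((-8/5:ℝ):ℂ) + ((6/5:ℝ):ℂ)*I)*c := by
      simp only [map_add, map_mul, Complex.conj_ofReal, Complex.conj_I]
      push_cast
      linear_combination (-(12/25)*I^2 - (8/5)*c*I^2 - I - (6/5)*c*I + (8/5)*c : ℂ) * Complex.I_mul_I
    have key2 : (starRingEnd ℂ) (((-3/5:ℝ):ℂ) - ((4/5:ℝ):ℂ)*I)
        * ((((4/5:ℝ):ℂ) - ((3/5:ℝ):ℂ)*I + -(2*I*c)) * (-I*I))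
        = I + (((8/5:ℝ):ℂ) + ((6/5:ℝ):ℂ)*I)*c := by
      simp only [map_sub, map_mul, Complex.conj_ofReal, Complex.conj_I]
      push_cast
      linear_combination ((12/25)*I^2 + (8/5)*c*I^2 - I - (6/5)*c*I - (8/5)*c : ℂ) * Complex.I_mul_I
    rw [key1] at e1
    rw [key2] at e2
    simp only [Complex.add_re, Complex.mul_re, Complex.I_re, Complex.I_im,
      Complex.ofReal_re, Complex.ofReal_im, Complex.add_im] at e1 e2
    norm_num at e1 e2
    have hre : c.re = 0 := by linarith
    have him : c.im = 0 := by linarith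
    have : c = 0 := by
      apply Complex.ext <;> simp [hre, him]
    rw [hR, this, map_zero, mul_zero]
end
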